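/- Let X be a normed vector space over ℂ, let P : X →L[ℂ] X be a continuous linear map with P ∘ P = P, and let D be a dense linear subspace of X with P '' D ⊆ D. Then the kernel of P equals the closure of (ker P) ∩ D. -/

import Mathlib

/-- Let `X` be a normed vector space over `ℂ`, `P : X →L[ℂ] X` a continuous
linear idempotent (`P ∘ P = P`), and `D` a dense linear subspace of `X` invariant under `P`.
Then `ker P = closure (ker P ∩ D)`. -/
theorem kernel_eq_closure_kernel_inter_dense
    {X : Type*} [NormedAddCommGroup X] [NormedSpace ℂ X]
    (P : X →L[ℂ] X) (hP : ∀ x, P (P x) = P x)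
    (D : Submodule ℂ X) (hdense : Dense (D : Set X))
    (hinv : P '' (D : Set X) ⊆ (D : Set X)) :
    (LinearMap.ker (P : X →ₗ[ℂ] X) : Set X) = closure ((LinearMap.ker (P : X →ₗ[ℂ] X) : Set X) ∩ (D : Set X)) := by
  apply Set.Subset.antisymm
  · intro x hx
    have hxk : P x = 0 := hx
    have hf : Continuous fun y : X => y - P y := continuous_id.sub P.continuous
    have hmap : Set.MapsTo (fun y : X => y - P y) (D : Set X)
        ((LinearMap.ker (P : X →ₗ[ℂ] X) : Set X) ∩ (D : Set X)) := by
      intro y hy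
      refine ⟨?_, ?_⟩
      · simp only [SetLike.mem_coe, LinearMap.mem_ker]
        simp [map_sub, hP y]
      · exact D.sub_mem hy (hinv ⟨y, hy, rfl⟩)
    have := map_mem_closure hf (hdense x) hmap
    simpa [hxk] using this
  · have hclosed : IsClosed (LinearMap.ker (P : X →ₗ[ℂ] X) : Set X) := by
      have : (LinearMap.ker (P : X →ₗ[ℂ] X) : Set X) = P ⁻¹' {0} := by ext y; simp
      rw [this]; exact IsClosed.preimage P.continuous isClosed_singleton
    exact hclosed.closure_subset_iff.mpr Set.inter_subset_left
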